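/- Let d be a positive even integer. Then in the shuffle algebra T(ℝ^d): det_⧢(W_d) = det_⧢(Anti(W_d)), where Anti(W_d) := (1/2)(W_d − W_dᵀ) is the skew-symmetric d×d matrix with (i,j) entry (1/2)(ij − ji). -/

import Mathlib

open scoped BigOperators

namespace ShufflePaper

variable {α : Type*}

/-- All shuffles (interleavings) of two words, with multiplicity. -/
def shuffles : List α → List α → Multiset (List α)
  | [], ys => {ys}
  | x :: xs, [] => {x :: xs}
  | x :: xs, y :: ys =>
      ((shuffles xs (y :: ys)).map (x :: ·)) + ((shuffles (x :: xs) ys).map (y :: ·))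
  termination_by l₁ l₂ => l₁.length + l₂.length

/-- The element of the shuffle algebra corresponding to a multiset of words. -/
noncomputable def ofMS (m : Multiset (List α)) : List α →₀ ℝ :=
  (m.map fun l => Finsupp.single l (1 : ℝ)).sum

/-- The shuffle product on the shuffle algebra `T(ℝ^d)` (bilinear extension). -/
noncomputable def sh (x y : List α →₀ ℝ) : List α →₀ ℝ :=
  x.sum fun v a => y.sum fun w b => (a * b) • ofMS (shuffles v w)

/-- Iterated shuffle product of a list of elements (empty word is the unit). -/
noncomputable def shProd : List (List α →₀ ℝ) → (List α →₀ ℝ)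
  | [] => Finsupp.single [] 1
  | x :: xs => sh x (shProd xs)

/-- Determinant in the commutative ring `(T(ℝ^d), ⧢)` via the Leibniz formula. -/
noncomputable def detSh {n : ℕ} (M : Fin n → Fin n → (List α →₀ ℝ)) : List α →₀ ℝ :=
  ∑ σ : Equiv.Perm (Fin n), (Equiv.Perm.sign σ : ℤ) •
    shProd ((List.finRange n).map fun i => M (σ i) i)

/-- The matrix `W_d` whose `(i,j)` entry is the two-letter word `ij`. -/
noncomputable def W (d : ℕ) : Fin d → Fin d → (List (Fin d) →₀ ℝ) :=
  fun i j => Finsupp.single [i, j] 1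

/-- `inv(t_{1,d}) = Σ_σ sign(σ) σ(1)⋯σ(d)`. -/
noncomputable def invT1 (d : ℕ) : List (Fin d) →₀ ℝ :=
  ∑ σ : Equiv.Perm (Fin d), (Equiv.Perm.sign σ : ℤ) •
    Finsupp.single ((List.finRange d).map σ) 1

/-- `inv(t_{2,d}) = Σ_{σ,τ} sign(σ)sign(τ) σ(1)τ(1)⋯σ(d)τ(d)`. -/
noncomputable def invT2 (d : ℕ) : List (Fin d) →₀ ℝ :=
  ∑ σ : Equiv.Perm (Fin d), ∑ τ : Equiv.Perm (Fin d),
    ((Equiv.Perm.sign σ : ℤ) * (Equiv.Perm.sign τ : ℤ)) •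
      Finsupp.single ((List.finRange d).flatMap fun i => [σ i, τ i]) 1

/- Right half-shuffle of two words: `u ≻ (v·i) = (u ⧢ v)·i`; zero if the
second word is empty. -/
open Classical in
noncomputable def hsW (u w : List α) : List α →₀ ℝ :=
  if h : w = [] then 0
  else ofMS ((shuffles u w.dropLast).map fun l => l ++ [w.getLast h])

/-- Right half-shuffle product (bilinear extension). -/
noncomputable def hs (x y : List α →₀ ℝ) : List α →₀ ℝ :=
  x.sum fun v a => y.sum fun w b => (a * b) • hsW v w

/-- Iterated right half-shuffle of a list of words, bracketed from the left. -/
noncomputable def hsList : List (List α) → (List α →₀ ℝ)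
  | [] => 0
  | w :: ws => ws.foldl (fun acc u => hs acc (Finsupp.single u 1)) (Finsupp.single w 1)

/-- Action of `σ ∈ S_n` on the span of words, permuting letter positions of
words of length `n` (letter in position `σ(k)` of `σ·w` is `w_k`); words of
other lengths are left untouched. -/
noncomputable def permAct {d : ℕ} (n : ℕ) (σ : Equiv.Perm (Fin n))
    (x : List (Fin d) →₀ ℝ) : List (Fin d) →₀ ℝ :=
  x.sum fun w a =>
    if h : w.length = n then
      Finsupp.single (List.ofFn fun p : Fin n => w.get (Fin.cast h.symm (σ⁻¹ p))) a
    else Finsupp.single w a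

/-- The subgroup `H ≤ S_{2d}` generated by the transpositions `(2i−1, 2i+1)` and
`(2i, 2i+2)`, `1 ≤ i ≤ d−1` (0-indexed: all swaps `(k, k+2)` with `k+2 < 2d`). -/
def Hgrp (d : ℕ) : Subgroup (Equiv.Perm (Fin (2 * d))) :=
  Subgroup.closure
    {g | ∃ k : ℕ, ∃ hk : k + 2 < 2 * d, g = Equiv.swap ⟨k, by omega⟩ ⟨k + 2, hk⟩}

/-- Pfaffian in the shuffle algebra, via the sum over permutations. -/
noncomputable def pfSh {n : ℕ} (A : Fin n → Fin n → (List α →₀ ℝ)) : List α →₀ ℝ :=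
  ((2 ^ (n / 2) * (n / 2).factorial : ℝ))⁻¹ •
    ∑ π : Equiv.Perm (Fin n), (Equiv.Perm.sign π : ℤ) •
      shProd ((List.finRange (n / 2)).map fun i : Fin (n / 2) =>
        A (π ⟨2 * (i : ℕ), by have := i.isLt; omega⟩)
          (π ⟨2 * (i : ℕ) + 1, by have := i.isLt; omega⟩))

/-- The matrix `Z_d` from de Bruijn's formula, odd case. -/
noncomputable def Z (d : ℕ) : Fin (d + 1) → Fin (d + 1) → (List (Fin d) →₀ ℝ) :=
  fun i j =>
    if hi : (i : ℕ) < d then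
      if hj : (j : ℕ) < d then
        Finsupp.single [⟨i, hi⟩, ⟨j, hj⟩] 1 - Finsupp.single [⟨j, hj⟩, ⟨i, hi⟩] 1
      else Finsupp.single [⟨i, hi⟩] 1
    else if hj : (j : ℕ) < d then -Finsupp.single [⟨j, hj⟩] 1
    else 0

theorem shuffles_nil_left (v : List α) : shuffles [] v = {v} := by simp [shuffles]

theorem shuffles_nil_right (v : List α) : shuffles v [] = {v} := by
  cases v <;> simp [shuffles]

theorem shuffles_comm : ∀ u v : List α, shuffles u v = shuffles v u
  | [], v => by rw [shuffles_nil_left, shuffles_nil_right]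
  | x :: xs, [] => by rw [shuffles_nil_left, shuffles_nil_right]
  | x :: xs, y :: ys => by
    simp only [shuffles]
    rw [shuffles_comm xs (y :: ys), shuffles_comm (x :: xs) ys, add_comm]
  termination_by u v => u.length + v.length

theorem bind_id {β : Type*} (m : Multiset β) : (m.bind fun t => {t}) = m := by
  simpa using Multiset.bind_singleton (s := m) (fun t : β => t)

theorem shuffles_assoc : ∀ u v w : List α,
    (shuffles u v).bind (fun s => shuffles s w)
      = (shuffles v w).bind (fun t => shuffles u t)
  | [], v, w => by simp [shuffles_nil_left, bind_id]
  | x :: xs, [], w => by simp [shuffles_nil_left, shuffles_nil_right]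
  | x :: xs, y :: ys, [] => by simp [shuffles_nil_right, bind_id]
  | x :: xs, y :: ys, z :: zs => by
    have h1 := shuffles_assoc xs (y :: ys) (z :: zs)
    have h2 := shuffles_assoc (x :: xs) ys (z :: zs)
    have h3 := shuffles_assoc (x :: xs) (y :: ys) zs
    simp only [shuffles, Multiset.add_bind, Multiset.bind_map, Multiset.map_bind,
      Multiset.bind_add] at *
    simp only [← Multiset.map_bind]
    rw [h1, h2, ← h3]
    simp only [Multiset.map_add]
    abel
  termination_by u v w => u.length + v.length + w.length

theorem ofMS_zero : ofMS (0 : Multiset (List α)) = 0 := rfl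

theorem ofMS_add (m m' : Multiset (List α)) : ofMS (m + m') = ofMS m + ofMS m' := by
  simp [ofMS]

theorem ofMS_cons (s : List α) (m : Multiset (List α)) :
    ofMS (s ::ₘ m) = Finsupp.single s 1 + ofMS m := by
  simp [ofMS]

theorem sh_single_single (u v : List α) (a b : ℝ) :
    sh (Finsupp.single u a) (Finsupp.single v b) = (a * b) • ofMS (shuffles u v) := by
  unfold sh
  rw [Finsupp.sum_single_index, Finsupp.sum_single_index]
  · simp
  · simp [Finsupp.sum_single_index]

theorem zero_sh (y : List α →₀ ℝ) : sh 0 y = 0 := by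
  simp [sh]

theorem sh_zero (x : List α →₀ ℝ) : sh x 0 = 0 := by
  simp [sh]

theorem add_sh (x x' y : List α →₀ ℝ) : sh (x + x') y = sh x y + sh x' y := by
  unfold sh
  rw [Finsupp.sum_add_index' (fun v => by simp) (fun v a a' => ?_)]
  rw [← Finsupp.sum_add]
  apply Finsupp.sum_congr
  intro w _
  rw [add_mul, add_smul]

theorem sh_add (x y y' : List α →₀ ℝ) : sh x (y + y') = sh x y + sh x y' := by
  unfold sh
  rw [← Finsupp.sum_add]
  apply Finsupp.sum_congr
  intro v _
  rw [Finsupp.sum_add_index' (fun w => by simp) (fun w b b' => by rw [mul_add, add_smul])]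

theorem smul_sh (c : ℝ) (x y : List α →₀ ℝ) : sh (c • x) y = c • sh x y := by
  unfold sh
  rw [Finsupp.sum_smul_index' (fun v => by simp), Finsupp.smul_sum]
  apply Finsupp.sum_congr
  intro v _
  rw [Finsupp.smul_sum]
  apply Finsupp.sum_congr
  intro w _
  rw [smul_smul, smul_eq_mul]; congr 1; ring

theorem sh_smul (c : ℝ) (x y : List α →₀ ℝ) : sh x (c • y) = c • sh x y := by
  unfold sh
  rw [Finsupp.smul_sum]
  apply Finsupp.sum_congr
  intro v _
  rw [Finsupp.sum_smul_index' (fun w => by simp), Finsupp.smul_sum]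
  apply Finsupp.sum_congr
  intro w _
  rw [smul_smul, smul_eq_mul]; congr 1; ring

theorem sh_comm (x y : List α →₀ ℝ) : sh x y = sh y x := by
  induction x using Finsupp.induction_linear with
  | zero => rw [zero_sh, sh_zero]
  | add f g hf hg => rw [add_sh, sh_add, hf, hg]
  | single u a =>
    induction y using Finsupp.induction_linear with
    | zero => rw [zero_sh, sh_zero]
    | add f g hf hg => rw [add_sh, sh_add, hf, hg]
    | single v b =>
      rw [sh_single_single, sh_single_single, shuffles_comm, mul_comm]

theorem sh_ofMS_single (m : Multiset (List α)) (w : List α) :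
    sh (ofMS m) (Finsupp.single w 1) = ofMS (m.bind fun s => shuffles s w) := by
  induction m using Multiset.induction_on with
  | empty => simp [ofMS_zero, zero_sh]
  | cons s m ih =>
    rw [ofMS_cons, Multiset.cons_bind, ofMS_add, add_sh, ih, sh_single_single, one_mul, one_smul]

theorem single_sh_ofMS (u : List α) (m : Multiset (List α)) :
    sh (Finsupp.single u 1) (ofMS m) = ofMS (m.bind fun t => shuffles u t) := by
  induction m using Multiset.induction_on with
  | empty => simp [ofMS_zero, sh_zero]
  | cons s m ih =>
    rw [ofMS_cons, Multiset.cons_bind, ofMS_add, sh_add, ih, sh_single_single, one_mul, one_smul]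

theorem sh_assoc (x y z : List α →₀ ℝ) : sh (sh x y) z = sh x (sh y z) := by
  induction x using Finsupp.induction_linear with
  | zero => simp [zero_sh]
  | add f g hf hg => simp [add_sh, hf, hg]
  | single u a =>
    induction y using Finsupp.induction_linear with
    | zero => simp [zero_sh, sh_zero]
    | add f g hf hg => simp [add_sh, sh_add, hf, hg]
    | single v b =>
      induction z using Finsupp.induction_linear with
      | zero => simp [sh_zero]
      | add f g hf hg => simp [sh_add, hf, hg]
      | single w c =>
        rw [sh_single_single, sh_single_single, smul_sh, sh_smul]
        have h1 : sh (ofMS (shuffles u v)) (Finsupp.single w c)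
            = c • ofMS ((shuffles u v).bind fun s => shuffles s w) := by
          have : (Finsupp.single w c) = c • (Finsupp.single w (1:ℝ)) := by
            rw [Finsupp.smul_single, smul_eq_mul, mul_one]
          rw [this, sh_smul, sh_ofMS_single]
        have h2 : sh (Finsupp.single u a) (ofMS (shuffles v w))
            = a • ofMS ((shuffles v w).bind fun t => shuffles u t) := by
          have : (Finsupp.single u a) = a • (Finsupp.single u (1:ℝ)) := by
            rw [Finsupp.smul_single, smul_eq_mul, mul_one]
          rw [this, smul_sh, single_sh_ofMS]
        rw [h1, h2, shuffles_assoc, smul_smul, smul_smul]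
        congr 1
        ring

theorem one_sh (y : List α →₀ ℝ) : sh (Finsupp.single [] 1) y = y := by
  induction y using Finsupp.induction_linear with
  | zero => rw [sh_zero]
  | add f g hf hg => rw [sh_add, hf, hg]
  | single v b =>
    rw [sh_single_single, shuffles_nil_left, one_mul]
    simp [ofMS, Finsupp.smul_single]

theorem scalar_sh (c : ℝ) (y : List α →₀ ℝ) : sh (Finsupp.single [] c) y = c • y := by
  have : (Finsupp.single ([]:List α) c) = c • (Finsupp.single ([]:List α) (1:ℝ)) := by
    rw [Finsupp.smul_single, smul_eq_mul, mul_one]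
  rw [this, smul_sh, one_sh]

def SA (α : Type*) := List α →₀ ℝ

namespace SA

noncomputable instance : AddCommGroup (SA α) := inferInstanceAs (AddCommGroup (List α →₀ ℝ))

noncomputable instance : CommRing (SA α) :=
  { (inferInstance : AddCommGroup (SA α)) with
    mul := sh
    one := Finsupp.single [] 1
    mul_assoc := sh_assoc
    one_mul := one_sh
    mul_one := fun x => (sh_comm x _).trans (one_sh x)
    left_distrib := sh_add
    right_distrib := fun x y z => add_sh x y z
    zero_mul := zero_sh
    mul_zero := sh_zero
    mul_comm := sh_comm }

def toSA : (List α →₀ ℝ) → SA α := id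

theorem mul_def (x y : SA α) : x * y = sh x y := rfl

theorem one_def : (1 : SA α) = toSA (Finsupp.single [] 1) := rfl

theorem toSA_add (x y : List α →₀ ℝ) : toSA (x + y) = toSA x + toSA y := rfl

theorem toSA_mul (x y : List α →₀ ℝ) : toSA x * toSA y = toSA (sh x y) := rfl

theorem intCast_def (z : ℤ) : (z : SA α) = toSA (Finsupp.single [] (z : ℝ)) := by
  induction z using Int.induction_on with
  | zero => simp; rfl
  | succ n ih =>
    rw [Int.cast_add, Int.cast_one, Int.cast_add, Int.cast_one, ih, Finsupp.single_add]
    rfl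
  | pred n ih =>
    rw [Int.cast_sub, Int.cast_one, Int.cast_sub, Int.cast_one, ih, Finsupp.single_sub]
    rfl

theorem zsmul_toSA (z : ℤ) (x : List α →₀ ℝ) : z • x = (z : ℝ) • x := by
  ext a
  simp

end SA

theorem shProd_eq (l : List (List α →₀ ℝ)) : SA.toSA (shProd l) = (l.map SA.toSA).prod := by
  induction l with
  | nil => rfl
  | cons x xs ih => rw [List.map_cons, List.prod_cons, ← ih]; rfl

theorem detSh_eq {n : ℕ} (M : Fin n → Fin n → (List α →₀ ℝ)) :
    SA.toSA (detSh M) = Matrix.det (Matrix.of fun i j => SA.toSA (M i j)) := by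
  rw [Matrix.det_apply']
  unfold detSh
  show ∑ σ : Equiv.Perm (Fin n), SA.toSA ((Equiv.Perm.sign σ : ℤ) • _) = _
  apply Finset.sum_congr rfl
  intro σ _
  have hprod : ∏ i, (Matrix.of fun i j => SA.toSA (M i j)) (σ i) i
      = SA.toSA (shProd ((List.finRange n).map fun i => M (σ i) i)) := by
    rw [Fin.prod_univ_def, shProd_eq, List.map_map]
    rfl
  rw [hprod, SA.intCast_def, SA.toSA_mul, scalar_sh, SA.zsmul_toSA]

section MatrixLemmas

open Matrix

variable {n : Type*} [DecidableEq n] [Fintype n] {R : Type*} [CommRing R]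

theorem myUpdateRow_comm (M : Matrix n n R) {i j : n} (h : i ≠ j) (b c : n → R) :
    Matrix.updateRow (Matrix.updateRow M i b) j c
      = Matrix.updateRow (Matrix.updateRow M j c) i b := by
  ext x y
  by_cases hxi : x = i
  · subst hxi
    rw [Matrix.updateRow_ne h, Matrix.updateRow_self, Matrix.updateRow_self]
  · by_cases hxj : x = j
    · subst hxj
      rw [Matrix.updateRow_self, Matrix.updateRow_ne h.symm, Matrix.updateRow_self]
    · rw [Matrix.updateRow_ne hxj, Matrix.updateRow_ne hxi, Matrix.updateRow_ne hxi,
        Matrix.updateRow_ne hxj]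

theorem aux_det_updateRow (A : Matrix n n R) (u : n → R) (c : n → R) (s : Finset n) (j : n)
    (hj : j ∉ s) :
    Matrix.det (Matrix.updateRow (s.piecewise (A + Matrix.of fun i k => c i * u k) A) j u)
      = Matrix.det (Matrix.updateRow A j u) := by
  classical
  induction s using Finset.induction_on with
  | empty => erw [Finset.piecewise_empty]
  | @insert k s hk ih =>
    have hjk : j ≠ k := fun h => hj (h ▸ Finset.mem_insert_self k s)
    have hjs : j ∉ s := fun h => hj (Finset.mem_insert_of_mem h)
    erw [Finset.piecewise_insert]
    set P : Matrix n n R := s.piecewise (A + Matrix.of fun i k => c i * u k) A with hP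
    have hupd : Function.update P k ((A + Matrix.of fun i k => c i * u k) k)
        = Matrix.updateRow P k (A k + c k • u) := by
      have hrow : (A + Matrix.of fun i k => c i * u k) k = A k + c k • u := by
        funext l; simp [Matrix.add_apply, smul_eq_mul]
      rw [← hrow]; rfl
    rw [hupd, myUpdateRow_comm _ hjk.symm, Matrix.det_updateRow_add, Matrix.det_updateRow_smul,
      myUpdateRow_comm _ hjk]
    have hPk : P k = A k := Finset.piecewise_eq_of_notMem _ _ _ hk
    have h1 : Matrix.updateRow P k (A k) = P := by rw [← hPk, Matrix.updateRow_eq_self]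
    have hzero : Matrix.det (Matrix.updateRow (Matrix.updateRow P j u) k u) = 0 := by
      apply Matrix.det_zero_of_row_eq hjk
      rw [Matrix.updateRow_ne hjk, Matrix.updateRow_self, Matrix.updateRow_self]
    rw [h1, ih hjs, hzero, mul_zero, add_zero]

theorem det_piecewise (A : Matrix n n R) (u : n → R) (c : n → R) (s : Finset n) :
    Matrix.det (s.piecewise (A + Matrix.of fun i k => c i * u k) A : Matrix n n R)
      = Matrix.det A + ∑ i ∈ s, c i * Matrix.det (Matrix.updateRow A i u) := by
  classical
  induction s using Finset.induction_on with
  | empty => erw [Finset.piecewise_empty, Finset.sum_empty, add_zero]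
  | @insert k s hk ih =>
    erw [Finset.piecewise_insert]
    set P : Matrix n n R := s.piecewise (A + Matrix.of fun i k => c i * u k) A with hP
    have hupd : Function.update P k ((A + Matrix.of fun i k => c i * u k) k)
        = Matrix.updateRow P k (A k + c k • u) := by
      have hrow : (A + Matrix.of fun i k => c i * u k) k = A k + c k • u := by
        funext l; simp [Matrix.add_apply, smul_eq_mul]
      rw [← hrow]; rfl
    rw [hupd, Matrix.det_updateRow_add, Matrix.det_updateRow_smul]
    have hPk : P k = A k := Finset.piecewise_eq_of_notMem _ _ _ hk
    have h1 : Matrix.updateRow P k (A k) = P := by rw [← hPk, Matrix.updateRow_eq_self]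
    have h2 : Matrix.det (Matrix.updateRow P k u) = Matrix.det (Matrix.updateRow A k u) :=
      aux_det_updateRow A u c s k hk
    rw [h1, ih, h2, Finset.sum_insert hk]
    ring

theorem det_add_rank_one_skew (A : Matrix n n R) (u : n → R) (h : R)
    (hA : Aᵀ = -A) (he : Even (Fintype.card n)) (h0 : Fintype.card n ≠ 0) (ht : h + h = 1) :
    Matrix.det (A + Matrix.of fun i j => h * u i * u j) = Matrix.det A := by
  classical
  have hdet := det_piecewise A u (fun i => h * u i) Finset.univ
  erw [Finset.piecewise_univ] at hdet
  have hupdet : ∀ i, Matrix.det (Matrix.updateRow A i u) = ∑ j, u j * adjugate A j i := by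
    intro i
    rw [← Matrix.cramer_transpose_apply]
    have hu : Matrix.cramer Aᵀ u = ∑ j, u j • Matrix.cramer Aᵀ (Pi.single j 1) := by
      have hu2 : u = ∑ j, u j • (Pi.single j 1 : n → R) := by
        ext l
        simp [Pi.single_apply]
      nth_rewrite 1 [hu2]
      rw [map_sum]
      simp only [LinearMap.map_smul]
    rw [hu, Finset.sum_apply]
    apply Finset.sum_congr rfl
    intro j _
    rw [Pi.smul_apply, smul_eq_mul]
    rfl
  have hadj : ∀ i j, adjugate A j i = - adjugate A i j := by
    have h1 : (adjugate A)ᵀ = -adjugate A := by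
      rw [Matrix.adjugate_transpose, hA, ← neg_one_smul R A, Matrix.adjugate_smul]
      have hodd : Odd (Fintype.card n - 1) :=
        Nat.Even.sub_odd (Nat.one_le_iff_ne_zero.mpr h0) he odd_one
      rw [hodd.neg_one_pow, neg_one_smul]
    intro i j
    have h2 := congrFun (congrFun h1 i) j
    simpa using h2
  set T := ∑ i, ∑ j, u i * u j * adjugate A j i with hT
  have hS : ∑ i, (h * u i) * Matrix.det (Matrix.updateRow A i u) = h * T := by
    rw [hT, Finset.mul_sum]
    apply Finset.sum_congr rfl
    intro i _
    rw [hupdet i, Finset.mul_sum, Finset.mul_sum]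
    apply Finset.sum_congr rfl
    intro j _
    ring
  have hTneg : T = -T := by
    calc T = ∑ i, ∑ j, u i * u j * adjugate A j i := hT
    _ = ∑ i, ∑ j, -(u i * u j * adjugate A i j) := by
        apply Finset.sum_congr rfl; intro i _
        apply Finset.sum_congr rfl; intro j _
        rw [hadj i j]; ring
    _ = -∑ i, ∑ j, u i * u j * adjugate A i j := by
        rw [← Finset.sum_neg_distrib]
        apply Finset.sum_congr rfl; intro i _
        rw [Finset.sum_neg_distrib]
    _ = -∑ j, ∑ i, u i * u j * adjugate A i j := by rw [Finset.sum_comm]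
    _ = -T := by
        rw [hT]
        congr 1
        apply Finset.sum_congr rfl; intro j _
        apply Finset.sum_congr rfl; intro i _
        ring
  have hT0 : T = 0 := by
    have h2 : T + T = 0 := by nth_rewrite 2 [hTneg]; ring
    calc T = 1 * T := (one_mul T).symm
    _ = (h + h) * T := by rw [ht]
    _ = h * (T + T) := by ring
    _ = 0 := by rw [h2, mul_zero]
  rw [hdet, hS, hT0, mul_zero, add_zero]

end MatrixLemmas

theorem e_mul_e {d : ℕ} (i j : Fin d) :
    sh (Finsupp.single [i] (1:ℝ)) (Finsupp.single [j] 1)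
      = Finsupp.single [i, j] 1 + Finsupp.single [j, i] 1 := by
  rw [sh_single_single, one_mul, one_smul]
  simp [shuffles, ofMS]

/-- for even `d`, `det_⧢(W_d) = det_⧢(Anti(W_d))`. -/
theorem det_W_eq_det_antisym_part (d : ℕ) (hd : 0 < d) (hde : Even d) :
    detSh (W d) =
      detSh (fun i j : Fin d =>
        ((1 : ℝ) / 2) •
          (Finsupp.single [i, j] (1 : ℝ) - Finsupp.single [j, i] 1)) := by
  suffices h : SA.toSA (detSh (W d))
      = SA.toSA (detSh (fun i j : Fin d =>
          ((1 : ℝ) / 2) • (Finsupp.single [i, j] (1 : ℝ) - Finsupp.single [j, i] 1))) by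
    exact h
  rw [detSh_eq, detSh_eq]
  set hh : SA (Fin d) := SA.toSA (Finsupp.single [] ((1:ℝ)/2)) with hhh
  set uu : Fin d → SA (Fin d) := fun i => SA.toSA (Finsupp.single [i] 1) with huu
  have key : ∀ i j : Fin d, Finsupp.single [i, j] (1:ℝ)
      = ((1:ℝ)/2) • (Finsupp.single [i, j] (1:ℝ) - Finsupp.single [j, i] 1)
        + sh (sh (Finsupp.single [] ((1:ℝ)/2)) (Finsupp.single [i] 1)) (Finsupp.single [j] 1) := by
    intro i j
    rw [sh_assoc, e_mul_e, scalar_sh]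
    module
  have hsplit : (Matrix.of fun i j : Fin d => SA.toSA ((W d) i j))
      = (Matrix.of fun i j : Fin d => SA.toSA
            (((1:ℝ)/2) • (Finsupp.single [i, j] (1:ℝ) - Finsupp.single [j, i] 1)))
          + Matrix.of (fun i j : Fin d => hh * uu i * uu j) := by
    ext i j
    exact key i j
  rw [hsplit]
  apply det_add_rank_one_skew
  · ext i j
    show ((1:ℝ)/2) • (Finsupp.single [j, i] (1:ℝ) - Finsupp.single [i, j] 1)
      = -(((1:ℝ)/2) • (Finsupp.single [i, j] (1:ℝ) - Finsupp.single [j, i] 1))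
    module
  · simpa using hde
  · simpa using hd.ne'
  · show SA.toSA (Finsupp.single [] ((1:ℝ)/2) + Finsupp.single [] ((1:ℝ)/2)) = SA.toSA (Finsupp.single [] 1)
    erw [← Finsupp.single_add]
    norm_num

end ShufflePaper
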